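/- arXiv:1707.05991 — 3 statements merged into one kernel-verified Lean document; each statement's English description precedes it below -/
import Mathlib

section
/- Let 0 < α < 1 and let n ≥ 1 be a natural number. Then |∑_{j=1}^∞ (-1)^j (1/j)(1-α^j)^n| ≤ (1-α)^n + 2·∑_{j=1}^∞ (1/(j(j+1)))·(1-α^{j+1})^n, where the series on the left converges and the series on the right converges absolutely. -/
open Filter

open Filter Finset

namespace Stmt2Aux

noncomputable def B (α : ℝ) (n : ℕ) (j : ℕ) : ℝ := (1 - α ^ j) ^ n
noncomputable def C (α : ℝ) (n : ℕ) (j : ℕ) : ℝ :=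
  (1 / (((j : ℝ) + 1) * ((j : ℝ) + 2))) * (1 - α ^ (j + 2)) ^ n
noncomputable def E (α : ℝ) (n : ℕ) (j : ℕ) : ℝ := (1 / ((j : ℝ) * ((j : ℝ) + 1))) * B α n (j + 1)
noncomputable def D (α : ℝ) (n : ℕ) (j : ℕ) : ℝ := (1 / (j : ℝ)) * (B α n (j + 1) - B α n j)
noncomputable def F (α : ℝ) (n : ℕ) (j : ℕ) : ℝ := (-1) ^ j * (1 / (j : ℝ)) * (1 - α ^ j) ^ n

variable {α : ℝ} {n : ℕ}

lemma pow_mem (h0 : 0 < α) (h1 : α < 1) (j : ℕ) : 0 < α ^ j ∧ α ^ j ≤ 1 :=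
  ⟨pow_pos h0 j, pow_le_one₀ h0.le h1.le⟩

lemma B_nonneg (h0 : 0 < α) (h1 : α < 1) (j : ℕ) : 0 ≤ B α n j :=
  pow_nonneg (by have := (pow_mem h0 h1 j).2; linarith) n

lemma B_le_one (h0 : 0 < α) (h1 : α < 1) (j : ℕ) : B α n j ≤ 1 :=
  pow_le_one₀ (by have := (pow_mem h0 h1 j).2; linarith) (by have := (pow_mem h0 h1 j).1; linarith)

lemma B_mono (h0 : 0 < α) (h1 : α < 1) : Monotone (B α n) := by
  intro j k hjk
  have h := pow_le_pow_of_le_one h0.le h1.le hjk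
  exact pow_le_pow_left₀ (by have := (pow_mem h0 h1 j).2; linarith) (by linarith) n

lemma E_succ (j : ℕ) : E α n (j + 1) = C α n j := by
  simp only [E, C, B]
  push_cast
  ring_nf

lemma C_nonneg (h0 : 0 < α) (h1 : α < 1) (j : ℕ) : 0 ≤ C α n j := by
  have := B_nonneg (n := n) h0 h1 (j + 2)
  simp only [B] at this
  have hp : (0:ℝ) < ((j : ℝ) + 1) * ((j : ℝ) + 2) := by positivity
  exact mul_nonneg (by positivity) this

lemma summable_C (h0 : 0 < α) (h1 : α < 1) : Summable (C α n) := by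
  have hs : Summable (fun j : ℕ => 1 / ((j : ℝ) + 1) ^ 2) := by
    have := (Real.summable_one_div_nat_pow (p := 2)).2 one_lt_two
    have h := (summable_nat_add_iff 1).2 this
    simpa using h
  refine Summable.of_nonneg_of_le (C_nonneg h0 h1) (fun j => ?_) hs
  have hB := B_le_one (n := n) h0 h1 (j + 2)
  have hB0 := B_nonneg (n := n) h0 h1 (j + 2)
  simp only [B] at hB hB0
  have h1' : C α n j ≤ 1 / (((j : ℝ) + 1) * ((j : ℝ) + 2)) := by
    have : (0:ℝ) < ((j : ℝ) + 1) * ((j : ℝ) + 2) := by positivity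
    calc C α n j ≤ (1 / (((j : ℝ) + 1) * ((j : ℝ) + 2))) * 1 := by
          exact mul_le_mul_of_nonneg_left hB (by positivity)
      _ = _ := by ring
  refine h1'.trans ?_
  rw [div_le_div_iff₀ (by positivity) (by positivity)]
  nlinarith [sq_nonneg ((j:ℝ)+1)]

lemma E_nonneg (h0 : 0 < α) (h1 : α < 1) (j : ℕ) : 0 ≤ E α n j :=
  mul_nonneg (by positivity) (B_nonneg h0 h1 _)

lemma D_nonneg (h0 : 0 < α) (h1 : α < 1) (j : ℕ) : 0 ≤ D α n j :=
  mul_nonneg (by positivity) (by have := B_mono (n := n) h0 h1 (Nat.le_succ j); linarith)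

lemma sum_E_eq (K : ℕ) : ∑ j ∈ Icc 1 K, E α n j = ∑ i ∈ range K, C α n i := by
  rw [← Finset.Ico_add_one_right_eq_Icc, Finset.sum_Ico_eq_sum_range]
  exact Finset.sum_congr rfl fun i _ => by rw [Nat.add_comm 1 i, E_succ]

lemma abel_identity (J : ℕ) :
    ∑ j ∈ Icc 1 (J + 1), D α n j =
      (1 / ((J : ℝ) + 1)) * B α n (J + 2) - B α n 1 + ∑ j ∈ Icc 1 J, E α n j := by
  induction J with
  | zero => simp [D]
  | succ J ih =>
    rw [Finset.sum_Icc_succ_top (by omega), ih, Finset.sum_Icc_succ_top (Nat.one_le_iff_ne_zero.2 (Nat.succ_ne_zero J))]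
    simp only [D, E]
    push_cast
    have h1 : ((J : ℝ) + 1) ≠ 0 := by positivity
    have h2 : ((J : ℝ) + 2) ≠ 0 := by positivity
    field_simp
    ring

lemma pair_eq (h0 : 0 < α) (h1 : α < 1) (k : ℕ) :
    F α n (2 * k + 1) + F α n (2 * k + 2) = D α n (2 * k + 1) - E α n (2 * k + 1) := by
  have hodd : Odd (2 * k + 1) := ⟨k, by ring⟩
  have heven : Even (2 * k + 2) := ⟨k + 1, by ring⟩
  simp only [F, D, E, B, hodd.neg_one_pow, heven.neg_one_pow]
  push_cast
  have h1' : ((2 * k : ℝ) + 1) ≠ 0 := by positivity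
  have h2' : ((2 * k : ℝ) + 2) ≠ 0 := by positivity
  field_simp
  ring

lemma pairing (h0 : 0 < α) (h1 : α < 1) (M : ℕ) :
    ∑ j ∈ Icc 1 (2 * M), F α n j =
      ∑ k ∈ range M, (D α n (2 * k + 1) - E α n (2 * k + 1)) := by
  induction M with
  | zero => simp
  | succ M ih =>
    have h2 : 2 * (M + 1) = (2 * M + 1) + 1 := by ring
    rw [h2, Finset.sum_Icc_succ_top (by omega), Finset.sum_Icc_succ_top (by omega), ih,
      Finset.sum_range_succ, add_assoc, pair_eq h0 h1]

end Stmt2Aux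

namespace Stmt2Aux

lemma summable_H (h0 : 0 < α) (h1 : α < 1) :
    Summable (fun j : ℕ => (-1 : ℝ) ^ j * (1 / (j : ℝ)) * (1 - (1 - α ^ j) ^ n)) := by
  have hgeo : Summable (fun j : ℕ => (n : ℝ) * α ^ j) :=
    (summable_geometric_of_lt_one h0.le h1).mul_left _
  refine Summable.of_norm_bounded hgeo (fun j => ?_)
  have hb0 := B_nonneg (n := n) h0 h1 j
  have hb1 := B_le_one (n := n) h0 h1 j
  simp only [B] at hb0 hb1
  have hbern : 1 - (n : ℝ) * α ^ j ≤ (1 - α ^ j) ^ n := by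
    have h2 : (-2 : ℝ) ≤ -(α ^ j) := by
      have := (pow_mem h0 h1 j).2; linarith
    have := one_add_mul_le_pow h2 n
    rw [← sub_eq_add_neg] at this
    simpa using this
  have hj0 : 0 ≤ (j : ℝ) := Nat.cast_nonneg j
  have hnorm : ‖(-1 : ℝ) ^ j * (1 / (j : ℝ)) * (1 - (1 - α ^ j) ^ n)‖
      = (1 / (j : ℝ)) * (1 - (1 - α ^ j) ^ n) := by
    rw [norm_mul, norm_mul, norm_pow, norm_neg, norm_one, one_pow, one_mul,
      Real.norm_eq_abs, Real.norm_eq_abs, abs_of_nonneg (by positivity),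
      abs_of_nonneg (by linarith)]
  rw [hnorm]
  rcases Nat.eq_zero_or_pos j with hj | hj
  · subst hj; simp
  · have hj1 : (1 : ℝ) ≤ (j : ℝ) := by exact_mod_cast hj
    have h1j : 1 / (j : ℝ) ≤ 1 := by
      rw [div_le_one (by linarith)]; linarith
    calc (1 / (j : ℝ)) * (1 - (1 - α ^ j) ^ n) ≤ 1 * (1 - (1 - α ^ j) ^ n) :=
          mul_le_mul_of_nonneg_right h1j (by linarith)
      _ = 1 - (1 - α ^ j) ^ n := one_mul _
      _ ≤ (n : ℝ) * α ^ j := by linarith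

lemma tendsto_G : ∃ l : ℝ, Tendsto (fun m : ℕ => ∑ j ∈ range m, (-1 : ℝ) ^ j * (1 / (j : ℝ)))
    atTop (nhds l) := by
  have hanti : Antitone (fun i : ℕ => 1 / ((i : ℝ) + 1)) := by
    intro i k hik
    have h : ((i : ℝ) + 1) ≤ (k : ℝ) + 1 := by
      have : (i : ℝ) ≤ (k : ℝ) := by exact_mod_cast hik
      linarith
    exact one_div_le_one_div_of_le (by positivity) h
  obtain ⟨l, hl⟩ := hanti.tendsto_alternating_series_of_tendsto_zero
    tendsto_one_div_add_atTop_nhds_zero_nat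
  refine ⟨-l, ?_⟩
  have key : ∀ m : ℕ, ∑ j ∈ range (m + 1), (-1 : ℝ) ^ j * (1 / (j : ℝ))
      = -∑ i ∈ range m, (-1 : ℝ) ^ i * (1 / ((i : ℝ) + 1)) := by
    intro m
    rw [Finset.sum_range_succ']
    simp only [Nat.cast_zero, div_zero, pow_zero, mul_zero, add_zero, one_mul]
    rw [← Finset.sum_neg_distrib]
    exact Finset.sum_congr rfl fun i _ => by push_cast; ring
  have hneg := hl.neg
  rw [← tendsto_add_atTop_iff_nat 1]
  exact hneg.congr fun m => (key m).symm

end Stmt2Aux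

/-- Key intermediate estimate in the proof of Lemma 5.2:
`|∑_{j=1}^∞ (-1)^j (1/j)(1-α^j)^n| ≤ (1-α)^n + 2 ∑_{j=1}^∞ (1/(j(j+1)))(1-α^{j+1})^n`,
where the left series converges and the right series converges absolutely.
(The right-hand series is indexed by `j : ℕ` via the shift `j ↦ j+1`.) -/
theorem stmt_2 (α : ℝ) (hα0 : 0 < α) (hα1 : α < 1) (n : ℕ) (hn : 1 ≤ n) :
    Summable (fun j : ℕ =>
      (1 / (((j : ℝ) + 1) * ((j : ℝ) + 2))) * (1 - α ^ (j + 2)) ^ n) ∧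
    ∃ L : ℝ, Tendsto (fun J : ℕ => ∑ j ∈ Finset.Icc 1 J,
        (-1 : ℝ) ^ j * (1 / (j : ℝ)) * (1 - α ^ j) ^ n) atTop (nhds L) ∧
      |L| ≤ (1 - α) ^ n +
        2 * ∑' j : ℕ,
          (1 / (((j : ℝ) + 1) * ((j : ℝ) + 2))) * (1 - α ^ (j + 2)) ^ n := by
  have hsumC : Summable (Stmt2Aux.C α n) := Stmt2Aux.summable_C hα0 hα1
  constructor
  · exact hsumC
  set T : ℝ := ∑' j : ℕ, Stmt2Aux.C α n j with hTdef
  have hT0 : (0 : ℝ) ≤ T := tsum_nonneg (Stmt2Aux.C_nonneg hα0 hα1)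
  -- existence of the limit
  obtain ⟨l, hl⟩ := Stmt2Aux.tendsto_G
  have hH := Stmt2Aux.summable_H (n := n) hα0 hα1
  have hHt := hH.hasSum.tendsto_sum_nat
  set L : ℝ := l - ∑' j : ℕ, (-1 : ℝ) ^ j * (1 / (j : ℝ)) * (1 - (1 - α ^ j) ^ n) with hLdef
  have htend : Tendsto (fun m : ℕ => ∑ j ∈ Finset.range m, Stmt2Aux.F α n j) atTop (nhds L) := by
    refine (hl.sub hHt).congr fun m => ?_
    rw [← Finset.sum_sub_distrib]
    exact Finset.sum_congr rfl fun j _ => by simp only [Stmt2Aux.F]; ring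
  have hS : ∀ J : ℕ, ∑ j ∈ Finset.Icc 1 J, Stmt2Aux.F α n j
      = ∑ j ∈ Finset.range (J + 1), Stmt2Aux.F α n j := by
    intro J
    rw [Finset.range_eq_Ico, Finset.sum_eq_sum_Ico_succ_bot (Nat.succ_pos J)]
    have hF0 : Stmt2Aux.F α n 0 = 0 := by simp [Stmt2Aux.F]
    rw [hF0, zero_add, Nat.succ_eq_add_one, Finset.Ico_add_one_right_eq_Icc]
  have hStend : Tendsto (fun J : ℕ => ∑ j ∈ Finset.Icc 1 J, Stmt2Aux.F α n j) atTop (nhds L) := by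
    have h2 := htend.comp (tendsto_add_atTop_nat 1)
    exact h2.congr fun J => (hS J).symm
  refine ⟨L, hStend, ?_⟩
  -- the bound via even partial sums
  set B1 : ℝ := Stmt2Aux.B α n 1 with hB1def
  have hB10 : 0 ≤ B1 := Stmt2Aux.B_nonneg hα0 hα1 1
  have hbound : ∀ M : ℕ, |∑ j ∈ Finset.Icc 1 (2 * M), Stmt2Aux.F α n j|
      ≤ 1 / ((M : ℝ) + 1) + (B1 + 2 * T) := by
    intro M
    rw [Stmt2Aux.pairing hα0 hα1, Finset.sum_sub_distrib]
    set X := ∑ k ∈ Finset.range M, Stmt2Aux.D α n (2 * k + 1) with hXdef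
    set Y := ∑ k ∈ Finset.range M, Stmt2Aux.E α n (2 * k + 1) with hYdef
    have hX0 : 0 ≤ X := Finset.sum_nonneg fun k _ => Stmt2Aux.D_nonneg hα0 hα1 _
    have hY0 : 0 ≤ Y := Finset.sum_nonneg fun k _ => Stmt2Aux.E_nonneg hα0 hα1 _
    have hYT : Y ≤ T := by
      have hYC : Y = ∑ j ∈ (Finset.range M).image (fun k => 2 * k), Stmt2Aux.C α n j := by
        rw [Finset.sum_image (fun a _ b _ h => by omega)]
        exact Finset.sum_congr rfl fun k _ => (Stmt2Aux.E_succ (2 * k))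
      rw [hYC]
      exact Summable.sum_le_tsum _ (fun j _ => Stmt2Aux.C_nonneg hα0 hα1 j) hsumC
    have hXb : X ≤ 1 / ((M : ℝ) + 1) - B1 + T := by
      have h1 : X ≤ ∑ j ∈ Finset.Icc 1 (2 * M + 1), Stmt2Aux.D α n j := by
        have himg : X = ∑ j ∈ (Finset.range M).image (fun k => 2 * k + 1), Stmt2Aux.D α n j :=
          (Finset.sum_image (fun a _ b _ h => by omega)).symm
        rw [himg]
        refine Finset.sum_le_sum_of_subset_of_nonneg ?_
          (fun j _ _ => Stmt2Aux.D_nonneg hα0 hα1 j)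
        intro j hj
        simp only [Finset.mem_image, Finset.mem_range] at hj
        obtain ⟨k, hk, rfl⟩ := hj
        simp only [Finset.mem_Icc]
        omega
      have h2 : ∑ j ∈ Finset.Icc 1 (2 * M + 1), Stmt2Aux.D α n j
          = (1 / ((2 * M : ℝ) + 1)) * Stmt2Aux.B α n (2 * M + 2) - B1
            + ∑ j ∈ Finset.Icc 1 (2 * M), Stmt2Aux.E α n j := by
        have := Stmt2Aux.abel_identity (α := α) (n := n) (2 * M)
        rw [this, hB1def]
        push_cast
        ring_nf
      have h3 : ∑ j ∈ Finset.Icc 1 (2 * M), Stmt2Aux.E α n j ≤ T := by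
        rw [Stmt2Aux.sum_E_eq]
        exact Summable.sum_le_tsum _ (fun j _ => Stmt2Aux.C_nonneg hα0 hα1 j) hsumC
      have h4 : (1 / ((2 * M : ℝ) + 1)) * Stmt2Aux.B α n (2 * M + 2) ≤ 1 / ((M : ℝ) + 1) := by
        have hBle := Stmt2Aux.B_le_one (n := n) hα0 hα1 (2 * M + 2)
        have hB0 := Stmt2Aux.B_nonneg (n := n) hα0 hα1 (2 * M + 2)
        have hm0 : (0 : ℝ) < (M : ℝ) + 1 := by positivity
        have hm1 : (0 : ℝ) < (2 * M : ℝ) + 1 := by positivity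
        calc (1 / ((2 * M : ℝ) + 1)) * Stmt2Aux.B α n (2 * M + 2)
            ≤ (1 / ((2 * M : ℝ) + 1)) * 1 := mul_le_mul_of_nonneg_left hBle (by positivity)
          _ = 1 / ((2 * M : ℝ) + 1) := mul_one _
          _ ≤ 1 / ((M : ℝ) + 1) := by
              apply one_div_le_one_div_of_le hm0
              have : (0:ℝ) ≤ (M : ℝ) := Nat.cast_nonneg M
              linarith
      linarith [h1, h2.le, h3, h4]
    rw [abs_le]
    constructor <;> linarith
  have heven : Tendsto (fun M : ℕ => |∑ j ∈ Finset.Icc 1 (2 * M), Stmt2Aux.F α n j|)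
      atTop (nhds |L|) := by
    have hsub : Tendsto (fun M : ℕ => (2 * M : ℕ)) atTop atTop :=
      tendsto_atTop_mono (fun M => Nat.le_mul_of_pos_left M (by norm_num)) tendsto_id
    exact (continuous_abs.tendsto L).comp (hStend.comp hsub)
  have hg : Tendsto (fun M : ℕ => 1 / ((M : ℝ) + 1) + (B1 + 2 * T)) atTop
      (nhds (0 + (B1 + 2 * T))) :=
    tendsto_one_div_add_atTop_nhds_zero_nat.add tendsto_const_nhds
  have hfin : |L| ≤ 0 + (B1 + 2 * T) := le_of_tendsto_of_tendsto' heven hg hbound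
  have hB1 : B1 = (1 - α) ^ n := by simp [hB1def, Stmt2Aux.B]
  rw [zero_add, hB1] at hfin
  exact hfin
end

section
/- Let V be a type, let η be a finite subset of V, let x, y ∈ η be distinct elements, and let g : Finset V → ℝ be a function satisfying the decoupling property: for every subset ξ of η ∖ {x,y}, g(ξ ∪ {x,y}) + g(ξ) = g(ξ ∪ {x}) + g(ξ ∪ {y}). Then ∑_{ξ ⊆ η} (-1)^{|η| - |ξ|} · g(ξ) = 0. -/
/-- Combinatorial core of Corollary 3.9 (finite-range property of the vacuum
potential): if `x ≠ y` are elements of the finite set `η` and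
`g : Finset V → ℝ` satisfies the decoupling property
`g(ξ ∪ {x,y}) + g(ξ) = g(ξ ∪ {x}) + g(ξ ∪ {y})` for every `ξ ⊆ η \ {x, y}`,
then the alternating (Möbius) sum `∑_{ξ ⊆ η} (-1)^{|η|-|ξ|} g(ξ)` vanishes. -/
theorem stmt_8 {V : Type*} [DecidableEq V] (η : Finset V) (x y : V)
    (hx : x ∈ η) (hy : y ∈ η) (hxy : x ≠ y) (g : Finset V → ℝ)
    (hg : ∀ ξ : Finset V, ξ ⊆ η \ {x, y} →
      g (ξ ∪ {x, y}) + g ξ = g (ξ ∪ {x}) + g (ξ ∪ {y})) :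
    ∑ ξ ∈ η.powerset, (-1 : ℝ) ^ (η.card - ξ.card) * g ξ = 0 := by
  set η' : Finset V := η \ {x, y} with hη'
  have hxη' : x ∉ η' := by simp [hη']
  have hyη' : y ∉ η' := by simp [hη']
  have hxyy : x ∉ insert y η' := by simp [hxη', hxy]
  have hηeq : η = insert x (insert y η') := by
    ext a
    by_cases hax : a = x <;> by_cases hay : a = y <;>
      simp [hη', hax, hay, hx, hy, Finset.mem_sdiff]
  have hcard : η.card = η'.card + 2 := by
    rw [hηeq, Finset.card_insert_of_notMem hxyy,
      Finset.card_insert_of_notMem hyη']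
  rw [hηeq, Finset.sum_powerset_insert hxyy, Finset.sum_powerset_insert hyη',
    Finset.sum_powerset_insert hyη']
  rw [← hηeq]
  have key : ∀ ξ ∈ η'.powerset,
      ((-1 : ℝ) ^ (η.card - ξ.card) * g ξ
        + (-1 : ℝ) ^ (η.card - (insert y ξ).card) * g (insert y ξ))
      + ((-1 : ℝ) ^ (η.card - (insert x ξ).card) * g (insert x ξ)
        + (-1 : ℝ) ^ (η.card - (insert x (insert y ξ)).card) * g (insert x (insert y ξ)))
      = 0 := by
    intro ξ hξ
    rw [Finset.mem_powerset] at hξ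
    have hxξ : x ∉ ξ := fun h => hxη' (hξ h)
    have hyξ : y ∉ ξ := fun h => hyη' (hξ h)
    have hcξ : ξ.card ≤ η'.card := Finset.card_le_card hξ
    have hxyξ : x ∉ insert y ξ := by simp [hxξ, hxy]
    have c1 : (insert y ξ).card = ξ.card + 1 := Finset.card_insert_of_notMem hyξ
    have c2 : (insert x ξ).card = ξ.card + 1 := Finset.card_insert_of_notMem hxξ
    have c3 : (insert x (insert y ξ)).card = ξ.card + 2 := by
      rw [Finset.card_insert_of_notMem hxyξ, c1]
    have e0 : η.card - ξ.card = (η'.card - ξ.card) + 2 := by omega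
    have e1 : η.card - (ξ.card + 1) = (η'.card - ξ.card) + 1 := by omega
    have e2 : η.card - (ξ.card + 2) = η'.card - ξ.card := by omega
    have hgξ := hg ξ hξ
    have hu1 : ξ ∪ {x, y} = insert x (insert y ξ) := by
      ext a; simp [or_comm, or_assoc]
    have hu2 : ξ ∪ {x} = insert x ξ := by ext a; simp [or_comm]
    have hu3 : ξ ∪ {y} = insert y ξ := by ext a; simp [or_comm]
    rw [hu1, hu2, hu3] at hgξ
    rw [c1, c2, c3, e0, e1, e2]
    linear_combination ((-1 : ℝ)) ^ (η'.card - ξ.card) * hgξ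
  have := Finset.sum_eq_zero key
  rw [Finset.sum_add_distrib, Finset.sum_add_distrib, Finset.sum_add_distrib] at this
  linarith [this]
end

section
/- Let 0 < a < 1 and 0 < b ≤ 1, and let n, m be natural numbers with n + m ≥ 1. Then the series ∑_{j=1}^∞ (-1)^{j+1} (1/j)(1-a^j)^n (1-b^j)^m converges, and ∑_{k=0}^{n} ∑_{l=0}^{m} C(n,k)·C(m,l)·(-1)^{(n-k)+(m-l)} · log(1 + a^k b^l) = (-1)^{n+m} · ∑_{j=1}^∞ (-1)^{j+1} (1/j)(1-a^j)^n (1-b^j)^m, where C(n,k) denotes the binomial coefficient and log the natural logarithm. -/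
open Filter


lemma aux_hasSum {x : ℝ} (hx0 : 0 < x) (hx1 : x < 1) :
    HasSum (fun i : ℕ => (-1 : ℝ) ^ i * x ^ (i + 1) / (i + 1)) (Real.log (1 + x)) := by
  have h : |(-x)| < 1 := by rw [abs_neg, abs_of_pos hx0]; exact hx1
  have := (Real.hasSum_pow_div_log_of_abs_lt_one h).neg
  rw [neg_neg, sub_neg_eq_add] at this
  convert this using 2 with i
  · rfl
  rw [neg_pow, neg_pow]
  ring

lemma aux_tendsto {x : ℝ} (hx0 : 0 < x) (hx1 : x ≤ 1) :
    Tendsto (fun J : ℕ => ∑ j ∈ Finset.Icc 1 J,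
      (-1 : ℝ) ^ (j + 1) * (1 / (j : ℝ)) * x ^ j) atTop (nhds (Real.log (1 + x))) := by
  have hrw : ∀ J : ℕ, ∑ j ∈ Finset.Icc 1 J, (-1 : ℝ) ^ (j + 1) * (1 / (j : ℝ)) * x ^ j
      = ∑ i ∈ Finset.range J, (-1 : ℝ) ^ i * x ^ (i + 1) / (i + 1) := by
    intro J
    rw [← Finset.Ico_add_one_right_eq_Icc, Finset.sum_Ico_eq_sum_range]
    refine Finset.sum_congr rfl fun i _ => ?_
    have : ((1 + i : ℕ) : ℝ) = (i : ℝ) + 1 := by push_cast; ring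
    rw [this]
    rw [show 1 + i + 1 = i + 2 from by ring, pow_add, show 1 + i = i + 1 from by ring]
    ring
  simp only [hrw]
  rcases lt_or_eq_of_le hx1 with hlt | heq
  · exact (aux_hasSum hx0 hlt).tendsto_sum_nat
  · -- x = 1 : alternating harmonic series via Abel's theorem
    subst heq
    have hanti : Antitone (fun i : ℕ => 1 / ((i : ℝ) + 1)) := by
      intro i j hij
      have : ((i : ℝ) + 1) ≤ (j : ℝ) + 1 := by exact_mod_cast by omega
      exact one_div_le_one_div_of_le (by positivity) this
    have h0 : Tendsto (fun i : ℕ => 1 / ((i : ℝ) + 1)) atTop (nhds 0) :=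
      tendsto_one_div_add_atTop_nhds_zero_nat
    obtain ⟨l, hl⟩ := hanti.tendsto_alternating_series_of_tendsto_zero h0
    have habel := Real.tendsto_tsum_powerSeries_nhdsWithin_lt hl
    have hcont : Tendsto (fun x : ℝ => Real.log (1 + x) / x) (nhdsWithin 1 (Set.Iio 1))
        (nhds (Real.log 2)) := by
      have hc : ContinuousAt (fun x : ℝ => Real.log (1 + x) / x) 1 := by
        apply ContinuousAt.div
        · exact (Real.continuousAt_log (by norm_num)).comp
            ((continuous_const.add continuous_id).continuousAt)
        · exact continuousAt_id
        · norm_num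
      have h2 : (fun x : ℝ => Real.log (1 + x) / x) 1 = Real.log 2 := by norm_num
      rw [← h2]
      exact hc.tendsto.mono_left nhdsWithin_le_nhds
    have heq' : (fun x : ℝ => ∑' n : ℕ, ((-1 : ℝ) ^ n * (1 / ((n : ℝ) + 1))) * x ^ n)
        =ᶠ[nhdsWithin 1 (Set.Iio 1)] (fun x : ℝ => Real.log (1 + x) / x) := by
      have hmem : Set.Ioo (0 : ℝ) 1 ∈ nhdsWithin 1 (Set.Iio 1) := by
        rw [mem_nhdsWithin]
        exact ⟨Set.Ioi 0, isOpen_Ioi, by norm_num, fun y hy => ⟨hy.1, hy.2⟩⟩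
      filter_upwards [hmem] with x hx
      have hs := (aux_hasSum hx.1 hx.2).div_const x
      have : (fun i : ℕ => (-1 : ℝ) ^ i * x ^ (i + 1) / (i + 1) / x)
          = fun i : ℕ => ((-1 : ℝ) ^ i * (1 / ((i : ℝ) + 1))) * x ^ i := by
        funext i
        have hx0 : x ≠ 0 := ne_of_gt hx.1
        have hi : ((i : ℝ) + 1) ≠ 0 := by positivity
        rw [pow_succ]
        field_simp
      rw [this] at hs
      exact hs.tsum_eq
    have hl2 : l = Real.log 2 := tendsto_nhds_unique (habel.congr' heq') hcont
    rw [hl2] at hl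
    have : Real.log (1 + 1) = Real.log 2 := by norm_num
    rw [this]
    convert hl using 2 with J
    refine Finset.sum_congr rfl fun i _ => ?_
    rw [one_pow]
    ring


lemma aux_binom (y : ℝ) (p : ℕ) :
    (1 - y) ^ p = (-1 : ℝ) ^ p * ∑ k ∈ Finset.range (p + 1),
      (p.choose k : ℝ) * (-1) ^ (p - k) * y ^ k := by
  have h1 : (1 - y : ℝ) = -(y - 1) := by ring
  rw [h1, neg_pow, sub_pow]
  congr 1
  refine Finset.sum_congr rfl fun k hk => ?_
  rw [Finset.mem_range] at hk
  have h2 : (-1 : ℝ) ^ (k + p) = (-1) ^ (p - k) := by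
    rw [show k + p = (p - k) + 2 * k from by omega, pow_add, pow_mul]
    norm_num
  rw [h2, one_pow]
  ring


/-- Explicit series representation of the vacuum potential of the
time-evolved Widom–Rowlinson model (Section 4.3): for `0 < a < 1`,
`0 < b ≤ 1` and `n + m ≥ 1`, the series
`∑_{j=1}^∞ (-1)^{j+1} (1/j)(1-a^j)^n (1-b^j)^m` converges, and the
alternating double binomial sum of `log(1 + a^k b^l)` equals `(-1)^{n+m}`
times its value. -/
theorem stmt_10 (a b : ℝ) (ha0 : 0 < a) (ha1 : a < 1) (hb0 : 0 < b)
    (hb1 : b ≤ 1) (n m : ℕ) (hnm : 1 ≤ n + m) :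
    ∃ L : ℝ,
      Tendsto (fun J : ℕ => ∑ j ∈ Finset.Icc 1 J,
          (-1 : ℝ) ^ (j + 1) * (1 / (j : ℝ)) * (1 - a ^ j) ^ n
            * (1 - b ^ j) ^ m) atTop (nhds L) ∧
      ∑ k ∈ Finset.range (n + 1), ∑ l ∈ Finset.range (m + 1),
          (n.choose k : ℝ) * (m.choose l : ℝ) * (-1 : ℝ) ^ ((n - k) + (m - l))
            * Real.log (1 + a ^ k * b ^ l)
        = (-1 : ℝ) ^ (n + m) * L := by
  set S : ℝ := ∑ k ∈ Finset.range (n + 1), ∑ l ∈ Finset.range (m + 1),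
      (n.choose k : ℝ) * (m.choose l : ℝ) * (-1 : ℝ) ^ ((n - k) + (m - l))
        * Real.log (1 + a ^ k * b ^ l) with hS
  refine ⟨(-1 : ℝ) ^ (n + m) * S, ?_, ?_⟩
  · -- pointwise identity in j
    have hj : ∀ j : ℕ, (-1 : ℝ) ^ (j + 1) * (1 / (j : ℝ)) * (1 - a ^ j) ^ n
          * (1 - b ^ j) ^ m
        = (-1 : ℝ) ^ (n + m) * ∑ k ∈ Finset.range (n + 1),
            ∑ l ∈ Finset.range (m + 1),
              (n.choose k : ℝ) * (m.choose l : ℝ) * (-1 : ℝ) ^ ((n - k) + (m - l))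
                * ((-1 : ℝ) ^ (j + 1) * (1 / (j : ℝ)) * (a ^ k * b ^ l) ^ j) := by
      intro j
      rw [aux_binom (a ^ j) n, aux_binom (b ^ j) m]
      have step1 : (-1 : ℝ) ^ (j + 1) * (1 / (j : ℝ))
            * ((-1 : ℝ) ^ n * ∑ k ∈ Finset.range (n + 1),
                (n.choose k : ℝ) * (-1) ^ (n - k) * (a ^ j) ^ k)
            * ((-1 : ℝ) ^ m * ∑ l ∈ Finset.range (m + 1),
                (m.choose l : ℝ) * (-1) ^ (m - l) * (b ^ j) ^ l)
          = (-1 : ℝ) ^ (n + m) * ((-1 : ℝ) ^ (j + 1) * (1 / (j : ℝ))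
            * ((∑ k ∈ Finset.range (n + 1),
                (n.choose k : ℝ) * (-1) ^ (n - k) * (a ^ j) ^ k)
              * ∑ l ∈ Finset.range (m + 1),
                (m.choose l : ℝ) * (-1) ^ (m - l) * (b ^ j) ^ l)) := by
        rw [pow_add]; ring
      rw [step1]
      congr 1
      rw [Finset.sum_mul_sum, Finset.mul_sum]
      refine Finset.sum_congr rfl fun k _ => ?_
      rw [Finset.mul_sum]
      refine Finset.sum_congr rfl fun l _ => ?_
      rw [mul_pow, ← pow_mul a, ← pow_mul b, Nat.mul_comm j k, Nat.mul_comm j l,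
        pow_mul a, pow_mul b, pow_add (-1 : ℝ) (n - k) (m - l)]
      ring
    -- sum interchange
    have hsum : ∀ J : ℕ, (∑ j ∈ Finset.Icc 1 J, (-1 : ℝ) ^ (j + 1) * (1 / (j : ℝ))
          * (1 - a ^ j) ^ n * (1 - b ^ j) ^ m)
        = (-1 : ℝ) ^ (n + m) * ∑ k ∈ Finset.range (n + 1),
            ∑ l ∈ Finset.range (m + 1),
              (n.choose k : ℝ) * (m.choose l : ℝ) * (-1 : ℝ) ^ ((n - k) + (m - l))
                * ∑ j ∈ Finset.Icc 1 J,
                    (-1 : ℝ) ^ (j + 1) * (1 / (j : ℝ)) * (a ^ k * b ^ l) ^ j := by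
      intro J
      rw [Finset.sum_congr rfl fun j _ => hj j, ← Finset.mul_sum]
      congr 1
      rw [Finset.sum_comm]
      refine Finset.sum_congr rfl fun k _ => ?_
      rw [Finset.sum_comm]
      refine Finset.sum_congr rfl fun l _ => ?_
      rw [← Finset.mul_sum]
    have hx : ∀ (k l : ℕ), 0 < a ^ k * b ^ l ∧ a ^ k * b ^ l ≤ 1 := by
      intro k l
      constructor
      · positivity
      · exact mul_le_one₀ (pow_le_one₀ ha0.le ha1.le) (by positivity)
          (pow_le_one₀ hb0.le hb1)
    have htend : Tendsto (fun J : ℕ => (-1 : ℝ) ^ (n + m)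
        * ∑ k ∈ Finset.range (n + 1), ∑ l ∈ Finset.range (m + 1),
            (n.choose k : ℝ) * (m.choose l : ℝ) * (-1 : ℝ) ^ ((n - k) + (m - l))
              * ∑ j ∈ Finset.Icc 1 J,
                  (-1 : ℝ) ^ (j + 1) * (1 / (j : ℝ)) * (a ^ k * b ^ l) ^ j)
        atTop (nhds ((-1 : ℝ) ^ (n + m) * S)) := by
      refine Tendsto.const_mul _ ?_
      rw [hS]
      refine tendsto_finset_sum _ fun k _ => tendsto_finset_sum _ fun l _ => ?_
      exact (aux_tendsto (hx k l).1 (hx k l).2).const_mul _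
    exact htend.congr fun J => (hsum J).symm
  · rw [← mul_assoc, ← pow_add]
    have : Even ((n + m) + (n + m)) := ⟨n + m, rfl⟩
    rw [this.neg_one_pow, one_mul]
end
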